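/- (Theorem 1 of the paper, explicit form.) Let V be a finite type, W : V → V → ℝ a row-stochastic matrix, α ∈ (0,1), and u ∈ V with W u u = 0. Let A* ⊆ V be a set with σ := ∑_{m ∈ A*} W u m < 1, let W_{A*} be the renormalized-deletion matrix of W at u with respect to A*, and let W_r be the matrix obtained from W by replacing row u with the zero row. Then for every rec ∈ V with rec ≠ u and W u rec = 0, PPR_{W_{A*}}(u, rec) = PPR_{W_{A*}}(u, u) · α^{−1}(1−α) · ∑_{n ∉ A*} W_{A*} u n · PPR_{W_r}(n, rec); i.e., the Personalized PageRank of rec personalized for u after removing the edges into A* factors into a term PPR_{W_{A*}}(u, u) depending only on A* and an aggregation of the scores PPR_{W_r}(n, rec) computed in the graph with all outgoing edges of u removed. -/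

import Mathlib

open scoped BigOperators

/-- A matrix is row-stochastic if all entries are nonnegative and each row sums to exactly 1. -/
def RowStochastic {V : Type*} [Fintype V] (W : Matrix V V ℝ) : Prop :=
  (∀ i j, 0 ≤ W i j) ∧ ∀ i, ∑ j, W i j = 1

/-- Personalized PageRank: `PPR W α s v = α * ∑' l, (1-α)^l * (W^l) s v`. -/
noncomputable def PPR {V : Type*} [Fintype V] [DecidableEq V]
    (W : Matrix V V ℝ) (α : ℝ) (s v : V) : ℝ :=
  α * ∑' l : ℕ, (1 - α) ^ l * (W ^ l) s v

/-- `zeroRow W u` is `W` with row `u` replaced by the zero row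
(removal of all outgoing edges of `u`). -/
def zeroRow {V : Type*} [DecidableEq V] (W : Matrix V V ℝ) (u : V) : Matrix V V ℝ :=
  fun n m => if n = u then 0 else W n m

/-- The renormalized-deletion matrix of `W` at `u` with respect to `A`: it agrees with `W`
outside row `u`; in row `u`, the entries into `A` are set to `0` and the remaining entries
are renormalized by `1 - ∑ x ∈ A, W u x`. -/
noncomputable def renormDel {V : Type*} [Fintype V] [DecidableEq V]
    (W : Matrix V V ℝ) (u : V) (A : Finset V) : Matrix V V ℝ :=
  fun n m =>
    if n = u then (if m ∈ A then 0 else W u m / (1 - ∑ x ∈ A, W u x)) else W n m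

lemma pow_substoch {V : Type*} [Fintype V] [DecidableEq V] (P : Matrix V V ℝ)
    (h0 : ∀ i j, 0 ≤ P i j) (h1 : ∀ i, ∑ j, P i j ≤ 1) (l : ℕ) :
    (∀ i j, 0 ≤ (P ^ l) i j) ∧ (∀ i, ∑ j, (P ^ l) i j ≤ 1) := by
  induction l with
  | zero =>
    constructor
    · intro i j
      by_cases h : i = j <;> simp [Matrix.one_apply, h]
    · intro i
      simp [Matrix.one_apply, Finset.sum_ite_eq]
  | succ l ih =>
    obtain ⟨ih0, ih1⟩ := ih
    constructor
    · intro i j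
      rw [pow_succ, Matrix.mul_apply]
      exact Finset.sum_nonneg fun k _ => mul_nonneg (ih0 i k) (h0 k j)
    · intro i
      rw [pow_succ]
      simp only [Matrix.mul_apply]
      rw [Finset.sum_comm]
      calc ∑ k, ∑ j, (P ^ l) i k * P k j = ∑ k, (P ^ l) i k * ∑ j, P k j := by
            simp [Finset.mul_sum]
        _ ≤ ∑ k, (P ^ l) i k * 1 :=
            Finset.sum_le_sum fun k _ => mul_le_mul_of_nonneg_left (h1 k) (ih0 i k)
        _ ≤ 1 := by simpa using ih1 i

lemma pow_entry_le_one {V : Type*} [Fintype V] [DecidableEq V] (P : Matrix V V ℝ)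
    (h0 : ∀ i j, 0 ≤ P i j) (h1 : ∀ i, ∑ j, P i j ≤ 1) (l : ℕ) (i j : V) :
    (P ^ l) i j ≤ 1 := by
  obtain ⟨p0, p1⟩ := pow_substoch P h0 h1 l
  calc (P ^ l) i j ≤ ∑ k, (P ^ l) i k :=
        Finset.single_le_sum (fun k _ => p0 i k) (Finset.mem_univ j)
    _ ≤ 1 := p1 i

lemma last_visit {V : Type*} [Fintype V] [DecidableEq V] (M R : Matrix V V ℝ) (u : V)
    (hRu : ∀ m, R u m = 0) (hMR : ∀ n m, n ≠ u → M n m = R n m) :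
    ∀ l : ℕ, ∀ v : V, v ≠ u →
      (M ^ (l + 1)) u v =
        ∑ k ∈ Finset.range (l + 1), (M ^ k) u u * ∑ n, M u n * (R ^ (l - k)) n v := by
  intro l
  induction l with
  | zero =>
    intro v hv
    simp [Matrix.one_apply, pow_succ, Finset.sum_ite_eq]
  | succ l ih =>
    intro v hv
    have hx1 : ∀ (j : ℕ) (n : V),
        ∑ x ∈ Finset.univ.erase u, (R ^ j) n x * R x v = (R ^ (j + 1)) n v := by
      intro j n
      rw [pow_succ, Matrix.mul_apply, ← Finset.add_sum_erase _ _ (Finset.mem_univ u)]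
      simp [hRu]
    have hsplit : (M ^ (l + 1 + 1)) u v
        = (M ^ (l + 1)) u u * M u v
          + ∑ x ∈ Finset.univ.erase u, (M ^ (l + 1)) u x * M x v := by
      rw [pow_succ, Matrix.mul_apply, ← Finset.add_sum_erase _ _ (Finset.mem_univ u)]
    have hstep : ∑ x ∈ Finset.univ.erase u, (M ^ (l + 1)) u x * M x v
        = ∑ k ∈ Finset.range (l + 1), (M ^ k) u u * ∑ n, M u n * (R ^ (l + 1 - k)) n v := by
      calc ∑ x ∈ Finset.univ.erase u, (M ^ (l + 1)) u x * M x v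
          = ∑ x ∈ Finset.univ.erase u,
              (∑ k ∈ Finset.range (l + 1), (M ^ k) u u * ∑ n, M u n * (R ^ (l - k)) n x)
                * R x v := by
            refine Finset.sum_congr rfl fun x hx => ?_
            have hxu : x ≠ u := Finset.ne_of_mem_erase hx
            rw [ih x hxu, hMR x v hxu]
        _ = ∑ k ∈ Finset.range (l + 1), (M ^ k) u u *
              ∑ n, M u n * ∑ x ∈ Finset.univ.erase u, (R ^ (l - k)) n x * R x v := by
            simp only [Finset.sum_mul, Finset.mul_sum]
            rw [Finset.sum_comm]
            refine Finset.sum_congr rfl fun k _ => ?_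
            rw [Finset.sum_comm]
            exact Finset.sum_congr rfl fun n _ => Finset.sum_congr rfl fun x _ => by ring
        _ = ∑ k ∈ Finset.range (l + 1), (M ^ k) u u * ∑ n, M u n * (R ^ (l + 1 - k)) n v := by
            refine Finset.sum_congr rfl fun k hk => ?_
            have hk' : k ≤ l := Nat.lt_succ_iff.mp (Finset.mem_range.mp hk)
            rw [Finset.sum_congr rfl fun n _ => by rw [hx1 (l - k) n]]
            have he : l - k + 1 = l + 1 - k := by omega
            rw [he]
    rw [hsplit, hstep]
    conv_rhs => rw [Finset.sum_range_succ]
    have hlast : (M ^ (l + 1)) u u * ∑ n, M u n * (R ^ (l + 1 - (l + 1))) n v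
        = (M ^ (l + 1)) u u * M u v := by
      simp [Matrix.one_apply, Finset.sum_ite_eq]
    rw [hlast]
    ring

theorem ppr_factorization_after_deletion
    {V : Type*} [Fintype V] [DecidableEq V] (W : Matrix V V ℝ)
    (hW : RowStochastic W) (α : ℝ) (hα : α ∈ Set.Ioo (0 : ℝ) 1)
    (u : V) (hWuu : W u u = 0)
    (A : Finset V) (hσ : ∑ m ∈ A, W u m < 1) :
    ∀ rec : V, rec ≠ u → W u rec = 0 →
      PPR (renormDel W u A) α u rec =
        PPR (renormDel W u A) α u u *
          (α⁻¹ * (1 - α) *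
            ∑ n ∈ Aᶜ, renormDel W u A u n * PPR (zeroRow W u) α n rec) := by
  intro rec hrec hWurec
  obtain ⟨hW0, hW1⟩ := hW
  obtain ⟨hα0, hα1⟩ := hα
  have hβ0 : (0:ℝ) ≤ 1 - α := by linarith
  have hβ1 : (1:ℝ) - α < 1 := by linarith
  set β : ℝ := 1 - α with hβdef
  set M : Matrix V V ℝ := renormDel W u A with hMdef
  set R : Matrix V V ℝ := zeroRow W u with hRdef
  set σ : ℝ := ∑ m ∈ A, W u m with hσdef
  have hσ' : 0 < 1 - σ := by linarith
  -- basic facts about M and R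
  have hMuA : ∀ n ∈ A, M u n = 0 := by
    intro n hn
    simp [hMdef, renormDel, hn]
  have hM0 : ∀ i j, 0 ≤ M i j := by
    intro i j
    by_cases hi : i = u
    · by_cases hj : j ∈ A <;>
        simp [hMdef, renormDel, hi, hj, ← hσdef, div_nonneg (hW0 u j) (le_of_lt hσ')]
    · simpa [hMdef, renormDel, hi] using hW0 i j
  have hMu_sum : ∑ j, M u j = 1 := by
    have h1 : ∑ j, M u j = ∑ j ∈ A, M u j + ∑ j ∈ Aᶜ, M u j :=
      (Finset.sum_add_sum_compl A _).symm
    have h2 : ∑ j ∈ A, M u j = 0 := Finset.sum_eq_zero hMuA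
    have h3 : ∑ j ∈ Aᶜ, M u j = ∑ j ∈ Aᶜ, W u j / (1 - σ) := by
      refine Finset.sum_congr rfl fun j hj => ?_
      have : j ∉ A := Finset.mem_compl.mp hj
      simp [hMdef, renormDel, this, ← hσdef]
    have h4 : ∑ j ∈ Aᶜ, W u j = 1 - σ := by
      have := Finset.sum_add_sum_compl A (W u)
      rw [hW1 u] at this
      linarith
    rw [h1, h2, h3, ← Finset.sum_div, h4, div_self (ne_of_gt hσ')]
    ring
  have hM1 : ∀ i, ∑ j, M i j ≤ 1 := by
    intro i
    by_cases hi : i = u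
    · rw [hi, hMu_sum]
    · have : ∑ j, M i j = ∑ j, W i j :=
        Finset.sum_congr rfl fun j _ => by simp [hMdef, renormDel, hi]
      rw [this, hW1 i]
  have hRu : ∀ m, R u m = 0 := fun m => by simp [hRdef, zeroRow]
  have hR0 : ∀ i j, 0 ≤ R i j := by
    intro i j
    by_cases hi : i = u <;> simp [hRdef, zeroRow, hi, hW0 i j]
  have hR1 : ∀ i, ∑ j, R i j ≤ 1 := by
    intro i
    by_cases hi : i = u
    · simp [hi, hRu]
    · have : ∑ j, R i j = ∑ j, W i j :=
        Finset.sum_congr rfl fun j _ => by simp [hRdef, zeroRow, hi]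
      rw [this, hW1 i]
  have hMR : ∀ n m, n ≠ u → M n m = R n m := by
    intro n m hn
    simp [hMdef, hRdef, renormDel, zeroRow, hn]
  -- series
  have hgeo : Summable fun l : ℕ => β ^ l := summable_geometric_of_lt_one hβ0 hβ1
  have hβpow : ∀ l : ℕ, 0 ≤ β ^ l := fun l => pow_nonneg hβ0 l
  have entry_bound : ∀ (P : Matrix V V ℝ), (∀ i j, 0 ≤ P i j) → (∀ i, ∑ j, P i j ≤ 1) →
      ∀ (s v : V), (Summable fun l : ℕ => ‖β ^ l * (P ^ l) s v‖) := by
    intro P h0 h1 s v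
    refine Summable.of_nonneg_of_le (fun l => norm_nonneg _) (fun l => ?_) hgeo
    rw [Real.norm_eq_abs, abs_mul, abs_of_nonneg (hβpow l),
      abs_of_nonneg ((pow_substoch P h0 h1 l).1 s v)]
    calc β ^ l * (P ^ l) s v ≤ β ^ l * 1 :=
          mul_le_mul_of_nonneg_left (pow_entry_le_one P h0 h1 l s v) (hβpow l)
      _ = β ^ l := mul_one _
  set a : ℕ → ℝ := fun k => β ^ k * (M ^ k) u u with hadef
  set b : ℕ → ℝ := fun j => β ^ j * ∑ n, M u n * (R ^ j) n rec with hbdef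
  set c : ℕ → ℝ := fun l => β ^ l * (M ^ l) u rec with hcdef
  have ha_norm : Summable fun k => ‖a k‖ := entry_bound M hM0 hM1 u u
  have hc_norm : Summable fun l => ‖c l‖ := entry_bound M hM0 hM1 u rec
  have hb_bound : ∀ j, 0 ≤ ∑ n, M u n * (R ^ j) n rec ∧ ∑ n, M u n * (R ^ j) n rec ≤ 1 := by
    intro j
    constructor
    · exact Finset.sum_nonneg fun n _ =>
        mul_nonneg (hM0 u n) ((pow_substoch R hR0 hR1 j).1 n rec)
    · calc ∑ n, M u n * (R ^ j) n rec ≤ ∑ n, M u n * 1 :=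
            Finset.sum_le_sum fun n _ =>
              mul_le_mul_of_nonneg_left (pow_entry_le_one R hR0 hR1 j n rec) (hM0 u n)
        _ = 1 := by simp only [mul_one]; exact hMu_sum
  have hb_norm : Summable fun j => ‖b j‖ := by
    refine Summable.of_nonneg_of_le (fun l => norm_nonneg _) (fun j => ?_) hgeo
    rw [hbdef, Real.norm_eq_abs, abs_mul, abs_of_nonneg (hβpow j),
      abs_of_nonneg (hb_bound j).1]
    calc β ^ j * ∑ n, M u n * (R ^ j) n rec ≤ β ^ j * 1 :=
          mul_le_mul_of_nonneg_left (hb_bound j).2 (hβpow j)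
      _ = β ^ j := mul_one _
  have hc_sum : Summable c := hc_norm.of_norm
  -- the shift identity
  have hc0 : c 0 = 0 := by
    simp [hcdef, Matrix.one_apply_ne (Ne.symm hrec)]
  have hshift : ∀ l : ℕ, c (l + 1) = β * ∑ k ∈ Finset.range (l + 1), a k * b (l - k) := by
    intro l
    rw [hcdef]
    simp only
    rw [last_visit M R u hRu hMR l rec hrec, Finset.mul_sum, Finset.mul_sum]
    refine Finset.sum_congr rfl fun k hk => ?_
    have hk' : k ≤ l := Nat.lt_succ_iff.mp (Finset.mem_range.mp hk)
    have he : β ^ (l + 1) = β * (β ^ k * β ^ (l - k)) := by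
      rw [show l + 1 = k + (l - k) + 1 by omega, pow_succ, pow_add]
      ring
    rw [he, hadef, hbdef]
    simp only
    ring
  -- Cauchy product
  have hcauchy : (∑' k, a k) * (∑' j, b j)
      = ∑' l, ∑ k ∈ Finset.range (l + 1), a k * b (l - k) :=
    tsum_mul_tsum_eq_tsum_sum_range_of_summable_norm ha_norm hb_norm
  have hmain : ∑' l, c l = β * ((∑' k, a k) * (∑' j, b j)) := by
    rw [Summable.tsum_eq_zero_add hc_sum, hc0, zero_add, hcauchy, ← tsum_mul_left]
    exact tsum_congr hshift
  -- split b's tsum into a finite sum of tsums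
  have hd_sum : ∀ n : V, Summable fun j : ℕ => M u n * (β ^ j * (R ^ j) n rec) := by
    intro n
    exact ((entry_bound R hR0 hR1 n rec).of_norm).mul_left (M u n)
  have hb_split : ∑' j, b j = ∑ n, M u n * ∑' j : ℕ, β ^ j * (R ^ j) n rec := by
    have h1 : ∀ j : ℕ, b j = ∑ n, M u n * (β ^ j * (R ^ j) n rec) := by
      intro j
      rw [hbdef]
      simp only [Finset.mul_sum]
      exact Finset.sum_congr rfl fun n _ => by ring
    rw [tsum_congr h1, Summable.tsum_finsetSum fun n _ => hd_sum n]
    exact Finset.sum_congr rfl fun n _ => tsum_mul_left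
  -- the compl sum reduces to the full sum
  have hcompl : ∑ n ∈ Aᶜ, M u n * PPR R α n rec = ∑ n, M u n * PPR R α n rec := by
    have := Finset.sum_add_sum_compl A (fun n => M u n * PPR R α n rec)
    have hz : ∑ n ∈ A, M u n * PPR R α n rec = 0 :=
      Finset.sum_eq_zero fun n hn => by rw [hMuA n hn, zero_mul]
    linarith
  -- assemble
  have hPPR_R : ∀ n, PPR R α n rec = α * ∑' j : ℕ, β ^ j * (R ^ j) n rec := fun n => rfl
  have hLHS : PPR M α u rec = α * (β * ((∑' k, a k) * (∑' j, b j))) := by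
    rw [PPR, ← hmain]
  rw [hLHS, hcompl]
  have hRHS : PPR M α u u = α * ∑' k, a k := rfl
  rw [hRHS, hb_split]
  have : ∑ n, M u n * PPR R α n rec = α * ∑ n, M u n * ∑' j : ℕ, β ^ j * (R ^ j) n rec := by
    rw [Finset.mul_sum]
    exact Finset.sum_congr rfl fun n _ => by rw [hPPR_R n]; ring
  rw [this]
  have hαne : α ≠ 0 := ne_of_gt hα0
  field_simp
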